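/- There exists a pair of quantum instruments that is parallelly compatible but not weakly compatible (and hence not traditionally compatible). Concretely: take compatible channels Λ₁ ≠ Λ₂ arising as marginals of a joint channel Λ, and instruments I₁ = {Φ'¹_x ∘ Λ₁}, I₂ = {Φ'²_y ∘ Λ₂} with Γ₁ ∘ Λ₁ ≠ Γ₂ ∘ Λ₂; then I₁ and I₂ are parallelly compatible but Σ_x Φ¹_x ≠ Σ_y Φ²_y. -/

import Mathlib

open Matrix BigOperators ComplexOrder

noncomputable section

/-- Partial trace over the second tensor factor. -/
def ptraceRight {A B : Type*} [Fintype B] (M : Matrix (A × B) (A × B) ℂ) :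
    Matrix A A ℂ := fun i j => ∑ k, M (i, k) (j, k)

/-- Partial trace over the first tensor factor. -/
def ptraceLeft {A B : Type*} [Fintype A] (M : Matrix (A × B) (A × B) ℂ) :
    Matrix B B ℂ := fun i j => ∑ k, M (k, i) (k, j)

/-- Complete positivity, via existence of a Kraus decomposition (Choi's theorem). -/
def IsCP {H K : Type*} [Fintype H] [Fintype K]
    (Φ : Matrix H H ℂ →ₗ[ℂ] Matrix K K ℂ) : Prop :=
  ∃ (m : ℕ) (Ks : Fin m → Matrix K H ℂ), ∀ ρ, Φ ρ = ∑ i, Ks i * ρ * (Ks i)ᴴ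

def IsTP {H K : Type*} [Fintype H] [Fintype K]
    (Φ : Matrix H H ℂ →ₗ[ℂ] Matrix K K ℂ) : Prop :=
  ∀ ρ, (Φ ρ).trace = ρ.trace

/-- A quantum channel is a CPTP map. -/
def IsChannel {H K : Type*} [Fintype H] [Fintype K]
    (Φ : Matrix H H ℂ →ₗ[ℂ] Matrix K K ℂ) : Prop := IsCP Φ ∧ IsTP Φ

/-- A quantum instrument: a finite family of CP maps summing to a CPTP map. -/
def IsInstrument {ι H K : Type*} [Fintype ι] [Fintype H] [Fintype K]
    (Φ : ι → (Matrix H H ℂ →ₗ[ℂ] Matrix K K ℂ)) : Prop :=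
  (∀ x, IsCP (Φ x)) ∧ IsTP (∑ x, Φ x)

def IsDensity {H : Type*} [Fintype H] (ρ : Matrix H H ℂ) : Prop :=
  ρ.PosSemidef ∧ ρ.trace = 1

def IsPOVM {ι H : Type*} [Fintype ι] [Fintype H] [DecidableEq H]
    (A : ι → Matrix H H ℂ) : Prop :=
  (∀ x, (A x).PosSemidef) ∧ (∑ x, A x) = 1

/-- `Φd` is the Heisenberg dual of `Φ`. -/
def IsDual {H K : Type*} [Fintype H] [Fintype K]
    (Φ : Matrix H H ℂ →ₗ[ℂ] Matrix K K ℂ)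
    (Φd : Matrix K K ℂ →ₗ[ℂ] Matrix H H ℂ) : Prop :=
  ∀ ρ X, ((Φ ρ) * X).trace = (ρ * Φd X).trace

/-- The instrument `I` measures the observable `A`. -/
def ACompatible {ι H K : Type*} [Fintype ι] [Fintype H] [Fintype K]
    (A : ι → Matrix H H ℂ) (I : ι → (Matrix H H ℂ →ₗ[ℂ] Matrix K K ℂ)) : Prop :=
  ∀ ρ, IsDensity ρ → ∀ x, (I x ρ).trace = (ρ * A x).trace

/-- Observable-observable compatibility: existence of a joint POVM. -/
def ObsCompatible {ιx ιy H : Type*} [Fintype ιx] [Fintype ιy] [Fintype H] [DecidableEq H]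
    (A : ιx → Matrix H H ℂ) (B : ιy → Matrix H H ℂ) : Prop :=
  ∃ G : ιx × ιy → Matrix H H ℂ, IsPOVM G ∧
    (∀ x, ∑ y, G (x, y) = A x) ∧ (∀ y, ∑ x, G (x, y) = B y)

/-- Channel-channel compatibility: existence of a joint channel. -/
def ChannelsCompatible {H K₁ K₂ : Type*} [Fintype H] [Fintype K₁] [Fintype K₂]
    (Λ₁ : Matrix H H ℂ →ₗ[ℂ] Matrix K₁ K₁ ℂ)
    (Λ₂ : Matrix H H ℂ →ₗ[ℂ] Matrix K₂ K₂ ℂ) : Prop :=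
  ∃ Λ : Matrix H H ℂ →ₗ[ℂ] Matrix (K₁ × K₂) (K₁ × K₂) ℂ, IsChannel Λ ∧
    (∀ ρ, ptraceRight (Λ ρ) = Λ₁ ρ) ∧ (∀ ρ, ptraceLeft (Λ ρ) = Λ₂ ρ)

/-- Observable-channel compatibility. -/
def ObsChannelCompatible {ι H K : Type*} [Fintype ι] [Fintype H] [Fintype K]
    (A : ι → Matrix H H ℂ) (Λ : Matrix H H ℂ →ₗ[ℂ] Matrix K K ℂ) : Prop :=
  ∃ I : ι → (Matrix H H ℂ →ₗ[ℂ] Matrix K K ℂ),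
    IsInstrument I ∧ ACompatible A I ∧ (∑ x, I x) = Λ

/-- Traditional compatibility of two instruments with the same output space. -/
def TraditionallyCompatible {ιx ιy H K : Type*} [Fintype ιx] [Fintype ιy] [Fintype H] [Fintype K]
    (I₁ : ιx → (Matrix H H ℂ →ₗ[ℂ] Matrix K K ℂ))
    (I₂ : ιy → (Matrix H H ℂ →ₗ[ℂ] Matrix K K ℂ)) : Prop :=
  ∃ Φ : ιx × ιy → (Matrix H H ℂ →ₗ[ℂ] Matrix K K ℂ), IsInstrument Φ ∧
    (∀ x, ∑ y, Φ (x, y) = I₁ x) ∧ (∀ y, ∑ x, Φ (x, y) = I₂ y)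

/-- Parallel compatibility of two instruments. -/
def ParallelCompatible {ιx ιy H K₁ K₂ : Type*} [Fintype ιx] [Fintype ιy]
    [Fintype H] [Fintype K₁] [Fintype K₂]
    (I₁ : ιx → (Matrix H H ℂ →ₗ[ℂ] Matrix K₁ K₁ ℂ))
    (I₂ : ιy → (Matrix H H ℂ →ₗ[ℂ] Matrix K₂ K₂ ℂ)) : Prop :=
  ∃ Φ : ιx × ιy → (Matrix H H ℂ →ₗ[ℂ] Matrix (K₁ × K₂) (K₁ × K₂) ℂ), IsInstrument Φ ∧
    (∀ x ρ, ∑ y, ptraceRight (Φ (x, y) ρ) = I₁ x ρ) ∧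
    (∀ y ρ, ∑ x, ptraceLeft (Φ (x, y) ρ) = I₂ y ρ)

/-- Tensor product of two maps on matrix algebras. -/
def tensorMap {A B C D : Type*} [Fintype A] [Fintype B] [Fintype C] [Fintype D]
    [DecidableEq A] [DecidableEq B]
    (Φ : Matrix A A ℂ →ₗ[ℂ] Matrix C C ℂ) (Ψ : Matrix B B ℂ →ₗ[ℂ] Matrix D D ℂ) :
    Matrix (A × B) (A × B) ℂ →ₗ[ℂ] Matrix (C × D) (C × D) ℂ where
  toFun M := fun p q => ∑ a, ∑ a', ∑ b, ∑ b',
    M (a, b) (a', b') * (Φ (Matrix.single a a' 1)) p.1 q.1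
      * (Ψ (Matrix.single b b' 1)) p.2 q.2
  map_add' M N := by
    funext p q
    show _ = (_ : ℂ) + _
    simp [Matrix.add_apply, add_mul, Finset.sum_add_distrib]
  map_smul' c M := by
    funext p q
    show _ = c * _
    simp [Matrix.smul_apply, Finset.mul_sum, mul_assoc]


/-- Conjugation by a fixed matrix, as a linear map. -/
def conjBy {H K : Type*} [Fintype H] [Fintype K] (V : Matrix K H ℂ) :
    Matrix H H ℂ →ₗ[ℂ] Matrix K K ℂ where
  toFun ρ := V * ρ * Vᴴ
  map_add' ρ σ := by simp [Matrix.mul_add, Matrix.add_mul]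
  map_smul' c ρ := by simp [Matrix.mul_smul, Matrix.smul_mul]

lemma conjBy_isCP {H K : Type*} [Fintype H] [Fintype K] (V : Matrix K H ℂ) :
    IsCP (conjBy V) := by
  refine ⟨1, fun _ => V, fun ρ => ?_⟩
  simp [conjBy]

/-- The isometry `|i⟩ ↦ |i⟩⊗|0⟩`. -/
def Viso : Matrix (Fin 2 × Fin 2) (Fin 2) ℂ :=
  fun p i => if p = (i, 0) then 1 else 0

lemma Viso_apply (ρ : Matrix (Fin 2) (Fin 2) ℂ) (i j k l : Fin 2) :
    (Viso * ρ * Visoᴴ) (i, j) (k, l) = if j = 0 ∧ l = 0 then ρ i k else 0 := by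
  simp only [Matrix.mul_apply, Matrix.conjTranspose_apply, Viso, Prod.mk.injEq]
  fin_cases i <;> fin_cases j <;> fin_cases k <;> fin_cases l <;>
    simp [Fintype.sum_prod_type, Fin.sum_univ_succ, Prod.ext_iff]

lemma VisoH_Viso : Visoᴴ * Viso = 1 := by
  funext a b
  simp only [Matrix.mul_apply, Matrix.conjTranspose_apply, Viso, Prod.mk.injEq]
  fin_cases a <;> fin_cases b <;> simp [Fintype.sum_prod_type, Fin.sum_univ_succ, Matrix.one_apply, Prod.ext_iff]

/-- There exists a pair of quantum instruments that is parallelly compatible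
but not weakly compatible (and hence not traditionally compatible). -/
theorem stmt_8 :
    ∃ (I₁ I₂ : Fin 1 → (Matrix (Fin 2) (Fin 2) ℂ →ₗ[ℂ] Matrix (Fin 2) (Fin 2) ℂ)),
      IsInstrument I₁ ∧ IsInstrument I₂ ∧ ParallelCompatible I₁ I₂ ∧
      (∑ x, I₁ x) ≠ (∑ y, I₂ y) ∧ ¬ TraditionallyCompatible I₁ I₂ := by
  -- I₁ = identity channel, I₂ = replacement channel ρ ↦ tr(ρ)|0⟩⟨0|.
  set R : Matrix (Fin 2) (Fin 2) ℂ →ₗ[ℂ] Matrix (Fin 2) (Fin 2) ℂ :=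
    ∑ i : Fin 2, conjBy (Matrix.single 0 i 1) with hR
  refine ⟨fun _ => LinearMap.id, fun _ => R, ?_, ?_, ?_, ?_, ?_⟩
  · refine ⟨fun _ => ⟨1, fun _ => 1, fun ρ => by simp⟩, fun ρ => by simp⟩
  · constructor
    · intro _
      refine ⟨2, fun i => Matrix.single 0 i 1, fun ρ => ?_⟩
      simp [hR, conjBy, LinearMap.sum_apply]
    · intro ρ
      simp only [Fin.sum_univ_one, hR, LinearMap.sum_apply, conjBy,
        LinearMap.coe_mk, AddHom.coe_mk]
      rw [Matrix.trace_sum]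
      simp only [Matrix.trace]
      simp [Matrix.mul_apply, Matrix.conjTranspose_apply, Matrix.single,
        Matrix.diag, Fin.sum_univ_succ]
  · -- parallel compatibility via ρ ↦ VρVᴴ with V the isometry |i⟩ ↦ |i⟩⊗|0⟩
    refine ⟨fun _ => conjBy Viso, ⟨fun _ => conjBy_isCP Viso, ?_⟩, ?_, ?_⟩
    · intro ρ
      simp only [Fin.sum_univ_one, LinearMap.sum_apply, conjBy,
        LinearMap.coe_mk, AddHom.coe_mk]
      rw [Matrix.trace_sum]
      have : (Viso * ρ * Visoᴴ).trace = ρ.trace := by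
        rw [Matrix.trace_mul_cycle, VisoH_Viso, Matrix.one_mul]
      simp [Fin.sum_univ_one, this]
    · intro x ρ
      funext i k
      simp only [Fin.sum_univ_one, ptraceRight, conjBy, LinearMap.coe_mk,
        AddHom.coe_mk, LinearMap.id_coe, id_eq]
      simp [Viso_apply, Fin.sum_univ_succ]
    · intro y ρ
      funext j l
      simp only [Fin.sum_univ_one, ptraceLeft, conjBy, LinearMap.coe_mk,
        AddHom.coe_mk, hR, LinearMap.sum_apply]
      simp only [Viso_apply]
      fin_cases j <;> fin_cases l <;>
        simp [conjBy, Matrix.mul_apply, Matrix.conjTranspose_apply,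
          Matrix.single, Fin.sum_univ_succ]
  · -- the total channels differ on |1⟩⟨1|
    intro h
    have h' := congrArg (fun f => (f (Matrix.single 1 1 (1:ℂ))) 1 1) h
    simp only [Fin.sum_univ_one, LinearMap.id_coe, id_eq, hR, LinearMap.sum_apply,
      conjBy, LinearMap.coe_mk, AddHom.coe_mk] at h'
    rw [Matrix.single, Matrix.of_apply] at h'
    simp [Matrix.sum_apply, Matrix.mul_apply, Matrix.conjTranspose_apply,
      Matrix.single, Fin.sum_univ_succ] at h'
  · -- traditional compatibility would force the total channels to agree
    rintro ⟨Φ, _, h1, h2⟩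
    have e1 := h1 0
    have e2 := h2 0
    rw [Fin.sum_univ_one] at e1 e2
    simp only [] at e1 e2
    have : LinearMap.id (R := ℂ) (M := Matrix (Fin 2) (Fin 2) ℂ) = R := e1.symm.trans e2
    have h' := congrArg (fun f => (f (Matrix.single 1 1 (1:ℂ))) 1 1) this
    simp only [LinearMap.id_coe, id_eq, hR, LinearMap.sum_apply,
      conjBy, LinearMap.coe_mk, AddHom.coe_mk] at h'
    rw [Matrix.single, Matrix.of_apply] at h'
    simp [Matrix.sum_apply, Matrix.mul_apply, Matrix.conjTranspose_apply,
      Matrix.single, Fin.sum_univ_succ] at h'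

end
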